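/- Let TR₁>0, TR₂>0, λ∈(0,1), and let a, b, c > 0. If both λ·e^{−TR₁/a} + (1−λ)·e^{−TR₁/b} = e^{−TR₁/c} and λ·e^{−(TR₁+TR₂)/a} + (1−λ)·e^{−(TR₁+TR₂)/b} = e^{−(TR₁+TR₂)/c} hold, then a = b = c. Consequently, for positive reals T₁ᵃ,T₂ᵃ,T₁ᵇ,T₂ᵇ,T₁^λ,T₂^λ satisfying the system λe^{−TR₁/T₁ᵃ}+(1−λ)e^{−TR₁/T₁ᵇ}=e^{−TR₁/T₁^λ}, λe^{−TR₁/T₂ᵃ}+(1−λ)e^{−TR₁/T₂ᵇ}=e^{−TR₁/T₂^λ}, λe^{−(TR₂+TR₁)/T₁ᵃ}+(1−λ)e^{−(TR₂+TR₁)/T₁ᵇ}=e^{−(TR₂+TR₁)/T₁^λ}, λe^{−(TR₂+TR₁)/T₂ᵃ}+(1−λ)e^{−(TR₂+TR₁)/T₂ᵇ}=e^{−(TR₂+TR₁)/T₂^λ}, and λe^{−TR₁/T₂ᵃ}e^{−TR₂/T₁ᵃ}+(1−λ)e^{−TR₁/T₂ᵇ}e^{−TR₂/T₁ᵇ}=e^{−TR₁/T₂^λ}e^{−TR₂/T₁^λ},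 one has T₁ᵃ=T₁ᵇ=T₁^λ and T₂ᵃ=T₂ᵇ=T₂^λ. -/

import Mathlib

lemma exp_rigid (TR1 TR2 lam : ℝ) (hTR1 : 0 < TR1) (hTR2 : 0 < TR2)
    (hlam0 : 0 < lam) (hlam1 : lam < 1)
    (a b c : ℝ) (ha : 0 < a) (hb : 0 < b) (hc : 0 < c)
    (h1 : lam * Real.exp (-TR1 / a) + (1 - lam) * Real.exp (-TR1 / b) = Real.exp (-TR1 / c))
    (h2 : lam * Real.exp (-(TR1 + TR2) / a) + (1 - lam) * Real.exp (-(TR1 + TR2) / b)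
        = Real.exp (-(TR1 + TR2) / c)) : a = b ∧ b = c := by
  set r : ℝ := (TR1 + TR2) / TR1 with hrdef
  have hr : 1 < r := by
    rw [hrdef, lt_div_iff₀ hTR1]; linarith
  have key : ∀ t : ℝ, 0 < t → Real.exp (-(TR1 + TR2) / t) = Real.exp (-TR1 / t) ^ r := by
    intro t ht
    rw [Real.rpow_def_of_pos (Real.exp_pos _), Real.log_exp, ← Real.exp_eq_exp, hrdef]
    field_simp
  rw [key a ha, key b hb, key c hc] at h2
  have hab : a = b := by
    by_contra hne
    have hexpne : Real.exp (-TR1 / a) ≠ Real.exp (-TR1 / b) := by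
      intro h
      apply hne
      have := Real.exp_injective h
      field_simp at this
      linarith
    have hstrict := (strictConvexOn_rpow hr).2 (Set.mem_Ici.mpr (Real.exp_pos (-TR1 / a)).le)
      (Set.mem_Ici.mpr (Real.exp_pos (-TR1 / b)).le) hexpne hlam0 (show (0:ℝ) < 1 - lam by linarith) (by ring)
    simp only [smul_eq_mul] at hstrict
    rw [h1] at hstrict
    rw [← h2] at hstrict
    exact lt_irrefl _ hstrict
  subst hab
  refine ⟨rfl, ?_⟩
  have h1' : Real.exp (-TR1 / a) = Real.exp (-TR1 / c) := by
    rw [← h1]; ring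
  have := Real.exp_injective h1'
  field_simp at this
  linarith

/-- Rigidity of convex combinations of exponentials: if
`λ e^{−TR₁/a} + (1−λ) e^{−TR₁/b} = e^{−TR₁/c}` and the same holds with `TR₁` replaced by
`TR₁ + TR₂`, then `a = b = c`; consequently the five-equation system arising from convex
combinations of IR-bSSFP Bloch trajectories forces `T₁ᵃ = T₁ᵇ = T₁^λ` and
`T₂ᵃ = T₂ᵇ = T₂^λ`. -/
theorem stmt12 (TR1 TR2 lam : ℝ) (hTR1 : 0 < TR1) (hTR2 : 0 < TR2)
    (hlam0 : 0 < lam) (hlam1 : lam < 1) :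
    (∀ a b c : ℝ, 0 < a → 0 < b → 0 < c →
      lam * Real.exp (-TR1 / a) + (1 - lam) * Real.exp (-TR1 / b) = Real.exp (-TR1 / c) →
      lam * Real.exp (-(TR1 + TR2) / a) + (1 - lam) * Real.exp (-(TR1 + TR2) / b)
        = Real.exp (-(TR1 + TR2) / c) →
      a = b ∧ b = c)
    ∧ (∀ T1a T2a T1b T2b T1l T2l : ℝ,
        0 < T1a → 0 < T2a → 0 < T1b → 0 < T2b → 0 < T1l → 0 < T2l →
        lam * Real.exp (-TR1 / T1a) + (1 - lam) * Real.exp (-TR1 / T1b)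
          = Real.exp (-TR1 / T1l) →
        lam * Real.exp (-TR1 / T2a) + (1 - lam) * Real.exp (-TR1 / T2b)
          = Real.exp (-TR1 / T2l) →
        lam * Real.exp (-(TR2 + TR1) / T1a) + (1 - lam) * Real.exp (-(TR2 + TR1) / T1b)
          = Real.exp (-(TR2 + TR1) / T1l) →
        lam * Real.exp (-(TR2 + TR1) / T2a) + (1 - lam) * Real.exp (-(TR2 + TR1) / T2b)
          = Real.exp (-(TR2 + TR1) / T2l) →
        lam * (Real.exp (-TR1 / T2a) * Real.exp (-TR2 / T1a))
            + (1 - lam) * (Real.exp (-TR1 / T2b) * Real.exp (-TR2 / T1b))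
          = Real.exp (-TR1 / T2l) * Real.exp (-TR2 / T1l) →
        (T1a = T1b ∧ T1b = T1l) ∧ (T2a = T2b ∧ T2b = T2l)) := by
  constructor
  · exact fun a b c ha hb hc h1 h2 =>
      exp_rigid TR1 TR2 lam hTR1 hTR2 hlam0 hlam1 a b c ha hb hc h1 h2
  · intro T1a T2a T1b T2b T1l T2l h1a h2a h1b h2b h1l h2l e1 e2 e3 e4 _
    rw [add_comm TR2 TR1] at e3 e4
    exact ⟨exp_rigid TR1 TR2 lam hTR1 hTR2 hlam0 hlam1 _ _ _ h1a h1b h1l e1 e3,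
           exp_rigid TR1 TR2 lam hTR1 hTR2 hlam0 hlam1 _ _ _ h2a h2b h2l e2 e4⟩
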